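/- The value det(VW)/∏_{ℓ=1}^n (w_ℓ·δ) is invariant under: (1) replacing any column w_i of W by w_i + λ_i with λ_i ∈ ker(V), provided δ ∈ (ker V)^⊥; and (2) rescaling any column w_ℓ by a positive scalar ξ. Here V ∈ ℝ^{n×k}, W ∈ ℝ^{k×n}, δ ∈ ℝ^k with w_ℓ·δ ≠ 0 for all ℓ. -/

import Mathlib

open Matrix

lemma mul_updateColumn' {n k : ℕ} (V : Matrix (Fin n) (Fin k) ℝ)
    (W : Matrix (Fin k) (Fin n) ℝ) (i : Fin n) (c : Fin k → ℝ) :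
    V * (W.updateCol i c) = (V * W).updateCol i (V.mulVec c) := by
  ext a b
  by_cases h : b = i <;>
    simp [mul_apply, updateCol_apply, mulVec, dotProduct, h]

lemma prod_updateColumn {n k : ℕ} (W : Matrix (Fin k) (Fin n) ℝ)
    (δ : Fin k → ℝ) (i : Fin n) (c : Fin k → ℝ) :
    ∏ ℓ, (W.updateCol i c)ᵀ.mulVec δ ℓ
      = (c ⬝ᵥ δ) * ∏ ℓ ∈ Finset.univ.erase i, Wᵀ.mulVec δ ℓ := by
  rw [← Finset.mul_prod_erase Finset.univ _ (Finset.mem_univ i)]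
  congr 1
  · simp [mulVec, dotProduct, updateCol_apply, mul_comm]
  · refine Finset.prod_congr rfl fun ℓ hℓ => ?_
    have : ℓ ≠ i := Finset.ne_of_mem_erase hℓ
    simp [mulVec, dotProduct, updateCol_apply, this]

/-- Well-definedness of the tropical sector integral formula
`det(VW)/∏_ℓ (w_ℓ·δ)`: it is invariant (1) under replacing a column `w_i`
of `W` by `w_i + λ` with `λ ∈ ker V`, provided `δ ⊥ ker V`, and
(2) under rescaling a column of `W` by a positive scalar `ξ`. -/
theorem sector_integral_well_defined {n k : ℕ}
    (V : Matrix (Fin n) (Fin k) ℝ) (W : Matrix (Fin k) (Fin n) ℝ)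
    (δ : Fin k → ℝ) (hδ : ∀ ℓ, Wᵀ.mulVec δ ℓ ≠ 0) :
    (∀ (i : Fin n) (lam : Fin k → ℝ), V.mulVec lam = 0 →
      (∀ μ : Fin k → ℝ, V.mulVec μ = 0 → δ ⬝ᵥ μ = 0) →
      (V * (W.updateCol i (fun r => W r i + lam r))).det /
        ∏ ℓ, (W.updateCol i (fun r => W r i + lam r))ᵀ.mulVec δ ℓ
      = (V * W).det / ∏ ℓ, Wᵀ.mulVec δ ℓ) ∧
    (∀ (i : Fin n) (ξ : ℝ), 0 < ξ →
      (V * (W.updateCol i (fun r => ξ * W r i))).det /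
        ∏ ℓ, (W.updateCol i (fun r => ξ * W r i))ᵀ.mulVec δ ℓ
      = (V * W).det / ∏ ℓ, Wᵀ.mulVec δ ℓ) := by
  have hcol : ∀ i : Fin n, V.mulVec (fun r => W r i) = fun a => (V * W) a i := by
    intro i; funext a; simp [mulVec, dotProduct, mul_apply]
  have hcoldot : ∀ i : Fin n, (fun r => W r i) ⬝ᵥ δ = Wᵀ.mulVec δ i := by
    intro i; simp [mulVec, dotProduct, mul_comm]
  have hupd : ∀ i : Fin n,
      (V * W).updateCol i (fun a => (V * W) a i) = V * W := by
    intro i; exact updateCol_eq_self _ _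
  constructor
  · intro i lam hlam hperp
    have hVc : V.mulVec (fun r => W r i + lam r) = fun a => (V * W) a i := by
      have : V.mulVec (fun r => W r i + lam r)
          = V.mulVec (fun r => W r i) + V.mulVec lam := by
        rw [← mulVec_add]; rfl
      rw [this, hlam, hcol i]; funext a; simp
    have hnum : (V * (W.updateCol i (fun r => W r i + lam r))).det
        = (V * W).det := by
      rw [mul_updateColumn', hVc, hupd i]
    have hlamδ : lam ⬝ᵥ δ = 0 := by
      rw [dotProduct_comm]; exact hperp lam hlam
    have hdot : (fun r => W r i + lam r) ⬝ᵥ δ = Wᵀ.mulVec δ i := by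
      have : (fun r => W r i + lam r) ⬝ᵥ δ
          = (fun r => W r i) ⬝ᵥ δ + lam ⬝ᵥ δ := by
        rw [← add_dotProduct]; rfl
      rw [this, hlamδ, add_zero, hcoldot i]
    have hden : ∏ ℓ, (W.updateCol i (fun r => W r i + lam r))ᵀ.mulVec δ ℓ
        = ∏ ℓ, Wᵀ.mulVec δ ℓ := by
      rw [prod_updateColumn, hdot,
        Finset.mul_prod_erase Finset.univ _ (Finset.mem_univ i)]
    rw [hnum, hden]
  · intro i ξ hξ
    have hVc : V.mulVec (fun r => ξ * W r i) = ξ • fun a => (V * W) a i := by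
      have : (fun r => ξ * W r i) = ξ • fun r => W r i := by funext r; simp
      rw [this, mulVec_smul, hcol i]
    have hnum : (V * (W.updateCol i (fun r => ξ * W r i))).det
        = ξ * (V * W).det := by
      rw [mul_updateColumn', hVc, det_updateCol_smul]
      rw [hupd i]
    have hdot : (fun r => ξ * W r i) ⬝ᵥ δ = ξ * Wᵀ.mulVec δ i := by
      have : (fun r => ξ * W r i) ⬝ᵥ δ = ξ * ((fun r => W r i) ⬝ᵥ δ) := by
        simp [dotProduct, Finset.mul_sum, mul_assoc]
      rw [this, hcoldot i]
    have hden : ∏ ℓ, (W.updateCol i (fun r => ξ * W r i))ᵀ.mulVec δ ℓ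
        = ξ * ∏ ℓ, Wᵀ.mulVec δ ℓ := by
      rw [prod_updateColumn, hdot, mul_assoc,
        Finset.mul_prod_erase Finset.univ _ (Finset.mem_univ i)]
    rw [hnum, hden, mul_div_mul_left _ _ (ne_of_gt hξ)]
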